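/- arXiv:0901.1679 — 4 statements merged into one kernel-verified Lean document; each statement's English description precedes it below -/
import Mathlib

section
/- Let r ≥ 1, let a_1 < a_2 < ⋯ < a_r be positive integers, and set m = Σ_{i=1}^r (a_i − i). For integers i ≥ 1 and k ≥ 0 let B_{i,k}(X) = (1/k!)·∏_{j=0}^{k−1} (X + i − 1 − j) ∈ ℚ[X] (the polynomial binomial coefficient 'X+i−1 choose k'). Then the polynomial m! · Σ_σ sgn(σ) ∏_{i=1}^r B_{i, a_i−σ(i)}(X) ∈ ℚ[X], where the sum runs over all permutations σ of {1,…,r} with σ(i) ≤ a_i for all i, has integer coefficients and degree at most m. -/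
open Finset

/-- The polynomial binomial coefficient `B_{i,k}(X) = (1/k!) ∏_{j=0}^{k-1} (X + i - 1 - j)`,
i.e. "X + i - 1 choose k" as a polynomial in X over ℚ. -/
noncomputable def Bpoly (i k : ℕ) : Polynomial ℚ :=
  ((k.factorial : ℚ)⁻¹) • ∏ j ∈ Finset.range k,
    (Polynomial.X + Polynomial.C ((i : ℚ) - 1 - (j : ℚ)))

lemma Bpoly_degree_le (i k : ℕ) : (Bpoly i k).degree ≤ (k : ℕ) := by
  unfold Bpoly
  refine le_trans (Polynomial.degree_smul_le _ _) ?_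
  refine le_trans (Polynomial.degree_prod_le _ _) ?_
  have h1 : ∀ j ∈ range k,
      (Polynomial.X + Polynomial.C ((i : ℚ) - 1 - (j : ℚ))).degree ≤ (1 : WithBot ℕ) :=
    fun j _ => le_of_eq (Polynomial.degree_X_add_C _)
  refine le_trans (Finset.sum_le_sum h1) ?_
  simp [Finset.sum_const]

lemma fact_smul_prod_lifts {r m : ℕ} (k : Fin r → ℕ) (hm : ∑ i, k i = m) :
    ((m.factorial : ℚ) • ∏ i : Fin r, Bpoly (i.1 + 1) (k i)) ∈
      Polynomial.lifts (Int.castRingHom ℚ) := by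
  have hB : ∀ i : Fin r, Bpoly (i.1 + 1) (k i) =
      Polynomial.C (((k i).factorial : ℚ)⁻¹) *
        ∏ j ∈ range (k i), (Polynomial.X + Polynomial.C (((i.1 + 1 : ℕ) : ℚ) - 1 - (j : ℚ))) := by
    intro i
    rw [Bpoly, Polynomial.smul_eq_C_mul]
  have hconst : (m.factorial : ℚ) * ∏ i : Fin r, (((k i).factorial : ℚ)⁻¹)
      = ((Nat.multinomial Finset.univ k : ℤ) : ℚ) := by
    have hspec : (∏ i : Fin r, (k i).factorial) * Nat.multinomial Finset.univ k
        = m.factorial := by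
      rw [Nat.multinomial_spec, hm]
    have hcast : ((∏ i : Fin r, (k i).factorial : ℕ) : ℚ) *
        ((Nat.multinomial Finset.univ k : ℕ) : ℚ) = (m.factorial : ℚ) := by
      rw [← Nat.cast_mul, hspec]
    have hne : ((∏ i : Fin r, (k i).factorial : ℕ) : ℚ) ≠ 0 :=
      Nat.cast_ne_zero.mpr (Finset.prod_ne_zero_iff.mpr fun i _ => Nat.factorial_ne_zero _)
    rw [Finset.prod_inv_distrib, ← Nat.cast_prod]
    push_cast
    field_simp
    rw [← hcast]
    push_cast
    ring_nf
  rw [show ((m.factorial : ℚ) • ∏ i : Fin r, Bpoly (i.1 + 1) (k i)) =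
      Polynomial.C ((Nat.multinomial Finset.univ k : ℤ) : ℚ) *
        ∏ i : Fin r, ∏ j ∈ range (k i),
          (Polynomial.X + Polynomial.C ((((i.1 : ℤ) - (j : ℤ)) : ℤ) : ℚ)) from ?_]
  · refine mul_mem ?_ (prod_mem fun i _ => prod_mem fun j _ => ?_)
    · exact Polynomial.C_mem_lifts (Int.castRingHom ℚ) _
    · exact add_mem (Polynomial.X_mem_lifts _) (Polynomial.C_mem_lifts (Int.castRingHom ℚ) _)
  · simp_rw [hB]
    rw [Finset.prod_mul_distrib, ← map_prod (Polynomial.C : ℚ →+* Polynomial ℚ),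
      Polynomial.smul_eq_C_mul, ← mul_assoc, ← Polynomial.C_mul, hconst]
    congr 1
    refine Finset.prod_congr rfl fun i _ => Finset.prod_congr rfl fun j _ => ?_
    congr 1
    push_cast
    ring_nf

lemma strictMono_le_apply {r : ℕ} (hr : 1 ≤ r) (a : Fin r → ℕ) (ha : StrictMono a)
    (ha1 : 0 < a ⟨0, hr⟩) : ∀ i : Fin r, i.1 + 1 ≤ a i := by
  intro ⟨n, hn⟩
  induction n with
  | zero => exact ha1
  | succ n ih =>
    have h1 : (⟨n, Nat.lt_of_succ_lt hn⟩ : Fin r) < ⟨n + 1, hn⟩ := by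
      simp [Fin.mk_lt_mk]
    have h2 := ha h1
    have h3 := ih (Nat.lt_of_succ_lt hn)
    simp only [Fin.val_mk] at h3 ⊢
    omega

/-- with m = Σ (aᵢ − i), the polynomial
m! · Σ_σ sgn(σ) ∏ᵢ B_{i, aᵢ−σ(i)}(X)  (sum over permutations σ with σ(i) ≤ aᵢ)
has integer coefficients and degree at most m.  Here `i : Fin r` stands for the
1-based index `i.1 + 1`. -/
theorem stmt1 (r : ℕ) (hr : 1 ≤ r) (a : Fin r → ℕ) (ha : StrictMono a)
    (ha1 : 0 < a ⟨0, hr⟩) :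
    let m : ℕ := ∑ i : Fin r, (a i - (i.1 + 1))
    let Q : Polynomial ℚ :=
      (m.factorial : ℚ) •
        ∑ σ ∈ Finset.univ.filter
            (fun σ : Equiv.Perm (Fin r) => ∀ i : Fin r, (σ i).1 + 1 ≤ a i),
          ((Equiv.Perm.sign σ : ℤ) : ℚ) •
            ∏ i : Fin r, Bpoly (i.1 + 1) (a i - ((σ i).1 + 1))
    (∀ n : ℕ, ∃ z : ℤ, Q.coeff n = (z : ℚ)) ∧ Q.degree ≤ (m : ℕ) := by
  intro m Q
  have hle := strictMono_le_apply hr a ha ha1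
  -- For each permutation in the filter, the exponents sum to m.
  have hsum : ∀ σ : Equiv.Perm (Fin r), (∀ i : Fin r, (σ i).1 + 1 ≤ a i) →
      ∑ i : Fin r, (a i - ((σ i).1 + 1)) = m := by
    intro σ hσ
    have hz : ((∑ i : Fin r, (a i - ((σ i).1 + 1)) : ℕ) : ℤ)
        = ((∑ i : Fin r, (a i - (i.1 + 1)) : ℕ) : ℤ) := by
      rw [Nat.cast_sum, Nat.cast_sum]
      rw [Finset.sum_congr rfl fun i _ => Nat.cast_sub (hσ i),
        Finset.sum_congr rfl fun i _ => Nat.cast_sub (hle i)]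
      rw [Finset.sum_sub_distrib, Finset.sum_sub_distrib]
      congr 1
      exact Equiv.sum_comp σ (fun i : Fin r => ((i.1 + 1 : ℕ) : ℤ))
    exact Nat.cast_injective hz
  constructor
  · -- integer coefficients
    have hQ : Q ∈ Polynomial.lifts (Int.castRingHom ℚ) := by
      show ((m.factorial : ℚ) •
        ∑ σ ∈ Finset.univ.filter
            (fun σ : Equiv.Perm (Fin r) => ∀ i : Fin r, (σ i).1 + 1 ≤ a i),
          ((Equiv.Perm.sign σ : ℤ) : ℚ) •
            ∏ i : Fin r, Bpoly (i.1 + 1) (a i - ((σ i).1 + 1))) ∈ _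
      rw [Finset.smul_sum]
      refine sum_mem fun σ hσ => ?_
      rw [Finset.mem_filter] at hσ
      rw [smul_comm, Polynomial.smul_eq_C_mul]
      refine mul_mem (Polynomial.C_mem_lifts (Int.castRingHom ℚ) _) ?_
      exact fact_smul_prod_lifts _ (hsum σ hσ.2)
    intro n
    have := (Polynomial.lifts_iff_coeff_lifts Q).mp hQ n
    obtain ⟨z, hz⟩ := this
    exact ⟨z, hz.symm⟩
  · -- degree bound
    refine le_trans (Polynomial.degree_smul_le _ _) ?_
    refine le_trans (Polynomial.degree_sum_le _ _) ?_
    refine Finset.sup_le fun σ hσ => ?_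
    rw [Finset.mem_filter] at hσ
    refine le_trans (Polynomial.degree_smul_le _ _) ?_
    refine le_trans (Polynomial.degree_prod_le _ _) ?_
    calc ∑ i : Fin r, (Bpoly (i.1 + 1) (a i - ((σ i).1 + 1))).degree
        ≤ ∑ i : Fin r, ((a i - ((σ i).1 + 1) : ℕ) : WithBot ℕ) :=
          Finset.sum_le_sum fun i _ => Bpoly_degree_le _ _
      _ = ((∑ i : Fin r, (a i - ((σ i).1 + 1)) : ℕ) : WithBot ℕ) := by
          rw [Nat.cast_sum]
      _ = (m : WithBot ℕ) := by rw [hsum σ hσ.2]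
end

section
/- Let K be a field, let τ ∈ K, let r ≥ 1, and let u_1,…,u_r ∈ K be pairwise distinct elements such that u_i + u_j + τ ≠ 0 for all i ≠ j. Then Σ_{j=1}^r [ ∏_{i=1}^r (1 − u_j u_i) · ∏_{i≠j} (1 + τu_i + u_i u_j) ] / [ ∏_{i≠j} (u_j + u_i + τ)(u_j − u_i) ] = (−1)^{r−1} ( 1 − ∏_{i=1}^r u_i^2 ). -/
open Finset Polynomial

section zdefs
variable {R : Type*} [CommRing R] {r : ℕ}

/-- numerator of the j-th term -/
def znumf (τ : R) (u : Fin r → R) (j : Fin r) : R :=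
  (∏ i, (1 - u j * u i)) * ∏ i ∈ univ.erase j, (1 + τ * u i + u i * u j)

/-- denominator of the j-th term -/
def zdenf (τ : R) (u : Fin r → R) (j : Fin r) : R :=
  ∏ i ∈ univ.erase j, ((u j + u i + τ) * (u j - u i))

/-- left-hand side, with denominators cleared -/
def zlhsf (τ : R) (u : Fin r → R) : R :=
  ∑ j, znumf τ u j * ∏ k ∈ univ.erase j, zdenf τ u k

/-- right-hand side, with denominators cleared -/
def zrhsf (τ : R) (u : Fin r → R) : R :=
  (-1) ^ (r - 1) * (1 - ∏ i, u i ^ 2) * ∏ j, zdenf τ u j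

lemma map_znumf {S : Type*} [CommRing S] (f : R →+* S) (τ : R) (u : Fin r → R) (j : Fin r) :
    f (znumf τ u j) = znumf (f τ) (f ∘ u) j := by
  simp [znumf, map_prod, Function.comp]

lemma map_zdenf {S : Type*} [CommRing S] (f : R →+* S) (τ : R) (u : Fin r → R) (j : Fin r) :
    f (zdenf τ u j) = zdenf (f τ) (f ∘ u) j := by
  simp [zdenf, map_prod, Function.comp]

lemma map_zlhsf {S : Type*} [CommRing S] (f : R →+* S) (τ : R) (u : Fin r → R) :
    f (zlhsf τ u) = zlhsf (f τ) (f ∘ u) := by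
  simp [zlhsf, map_sum, map_prod, map_znumf, map_zdenf]

lemma map_zrhsf {S : Type*} [CommRing S] (f : R →+* S) (τ : R) (u : Fin r → R) :
    f (zrhsf τ u) = zrhsf (f τ) (f ∘ u) := by
  simp [zrhsf, map_prod, map_zdenf, Function.comp]

end zdefs

lemma zprod_univ_erase {ι M : Type*} [Fintype ι] [DecidableEq ι] [CommMonoid M]
    (e : ι) (f : ι → M) :
    ∏ k ∈ univ.erase e, f k = ∏ k : ι, (if k = e then 1 else f k) := by
  rw [← Finset.mul_prod_erase univ (fun k => if k = e then 1 else f k) (mem_univ e),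
    if_pos rfl, one_mul]
  exact Finset.prod_congr rfl fun k hk => by rw [if_neg (Finset.ne_of_mem_erase hk)]

lemma zprod_neg {ι F : Type*} [CommRing F] (s : Finset ι) (f : ι → F) :
    ∏ i ∈ s, (-f i) = (-1) ^ s.card * ∏ i ∈ s, f i := by
  rw [← Finset.prod_const, ← Finset.prod_mul_distrib]
  exact Finset.prod_congr rfl fun i _ => by ring

lemma zprod_cmul {ι F : Type*} [CommRing F] (s : Finset ι) (c : F) (f : ι → F) :
    ∏ i ∈ s, (c * f i) = c ^ s.card * ∏ i ∈ s, f i := by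
  rw [← Finset.prod_const, ← Finset.prod_mul_distrib]

section zsplit
variable {r : ℕ} {M : Type*} [CommMonoid M]

lemma zsplit_ll (j : Fin r) (f : (Fin r ⊕ Fin r) ⊕ Bool → M) :
    ∏ k ∈ univ.erase (Sum.inl (Sum.inl j)), f k
      = ((∏ i ∈ univ.erase j, f (Sum.inl (Sum.inl i))) * ∏ i, f (Sum.inl (Sum.inr i)))
          * (f (Sum.inr true) * f (Sum.inr false)) := by
  rw [zprod_univ_erase, Fintype.prod_sum_type, Fintype.prod_sum_type, Fintype.prod_bool]
  rw [zprod_univ_erase j (fun i => f (Sum.inl (Sum.inl i)))]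
  simp

lemma zsplit_lr (j : Fin r) (f : (Fin r ⊕ Fin r) ⊕ Bool → M) :
    ∏ k ∈ univ.erase (Sum.inl (Sum.inr j)), f k
      = ((∏ i, f (Sum.inl (Sum.inl i))) * ∏ i ∈ univ.erase j, f (Sum.inl (Sum.inr i)))
          * (f (Sum.inr true) * f (Sum.inr false)) := by
  rw [zprod_univ_erase, Fintype.prod_sum_type, Fintype.prod_sum_type, Fintype.prod_bool]
  rw [zprod_univ_erase j (fun i => f (Sum.inl (Sum.inr i)))]
  simp

lemma zsplit_rt (f : (Fin r ⊕ Fin r) ⊕ Bool → M) :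
    ∏ k ∈ univ.erase (Sum.inr true), f k
      = ((∏ i, f (Sum.inl (Sum.inl i))) * ∏ i, f (Sum.inl (Sum.inr i))) * f (Sum.inr false) := by
  rw [zprod_univ_erase, Fintype.prod_sum_type, Fintype.prod_sum_type, Fintype.prod_bool]
  simp

lemma zsplit_rf (f : (Fin r ⊕ Fin r) ⊕ Bool → M) :
    ∏ k ∈ univ.erase (Sum.inr false), f k
      = ((∏ i, f (Sum.inl (Sum.inl i))) * ∏ i, f (Sum.inl (Sum.inr i))) * f (Sum.inr true) := by
  rw [zprod_univ_erase, Fintype.prod_sum_type, Fintype.prod_sum_type, Fintype.prod_bool]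
  simp

end zsplit

lemma zkey {F : Type*} [Field F] {ι : Type*} [Fintype ι] [DecidableEq ι]
    (v : ι → F) (hv : Function.Injective v) (f : F[X])
    (hdeg : f.degree < (Fintype.card ι : ℕ)) :
    ∑ j : ι, f.eval (v j) / ∏ k ∈ univ.erase j, (v j - v k)
      = f.coeff (Fintype.card ι - 1) := by
  have hvs : Set.InjOn v (univ : Finset ι) := hv.injOn
  have hcard : #(univ : Finset ι) = Fintype.card ι := Finset.card_univ
  have hf := Lagrange.eq_interpolate hvs (by rwa [hcard])
  have hco : ∀ j : ι, (Lagrange.basis univ v j).coeff (Fintype.card ι - 1)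
      = ∏ k ∈ univ.erase j, (v j - v k)⁻¹ := by
    intro j
    have hnd : (Lagrange.basis univ v j).natDegree = Fintype.card ι - 1 := by
      rw [Lagrange.natDegree_basis hvs (mem_univ j), hcard]
    rw [← hnd, ← leadingCoeff, Lagrange.basis, leadingCoeff_prod]
    refine Finset.prod_congr rfl fun k _ => ?_
    rw [Lagrange.basisDivisor, leadingCoeff_mul, leadingCoeff_C,
      (monic_X_sub_C (v k)).leadingCoeff, mul_one]
  calc ∑ j : ι, f.eval (v j) / ∏ k ∈ univ.erase j, (v j - v k)
      = ∑ j : ι, f.eval (v j) * (Lagrange.basis univ v j).coeff (Fintype.card ι - 1) := by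
        refine Finset.sum_congr rfl fun j _ => ?_
        rw [hco, div_eq_mul_inv, ← Finset.prod_inv_distrib]
    _ = f.coeff (Fintype.card ι - 1) := by
        conv_rhs => rw [hf]
        rw [Lagrange.interpolate_apply, finset_sum_coeff]
        refine Finset.sum_congr rfl fun j _ => ?_
        rw [coeff_C_mul]

lemma zcomplex_case {r : ℕ} (hr : 1 ≤ r) (τ : ℂ) (u : Fin r → ℂ)
    (hinj : Function.Injective u)
    (h2 : ∀ i j, i ≠ j → u i + u j + τ ≠ 0)
    (h3 : ∀ j, 2 * u j + τ ≠ 0)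
    (h4 : ∀ j, 1 + τ * u j + u j ^ 2 ≠ 0)
    (h5 : τ ^ 2 - 4 ≠ 0)
    (h6 : ∀ j, u j ≠ 0) :
    ∑ j, znumf τ u j / zdenf τ u j = (-1 : ℂ) ^ (r - 1) * (1 - ∏ i, u i ^ 2) := by
  classical
  -- roots of z² + τz + 1
  obtain ⟨s, hs⟩ : ∃ s : ℂ, s ^ 2 = τ ^ 2 - 4 :=
    IsAlgClosed.exists_pow_nat_eq (τ ^ 2 - 4) (n := 2) (by norm_num)
  obtain ⟨α, hαroot⟩ : ∃ α : ℂ, α ^ 2 + τ * α + 1 = 0 :=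
    ⟨(-τ + s) / 2, by linear_combination hs / 4⟩
  have hα0 : α ≠ 0 := by intro h; rw [h] at hαroot; norm_num at hαroot
  obtain ⟨β, hprodαβ⟩ : ∃ β, α * β = 1 := ⟨α⁻¹, mul_inv_cancel₀ hα0⟩
  have hsumαβ : α + β = -τ := by
    linear_combination β * hαroot - (α + τ) * hprodαβ
  have hβroot : β ^ 2 + τ * β + 1 = 0 := by
    linear_combination β ^ 2 * hαroot - (α * β + 1 + τ * β) * hprodαβ
  have hαβ : α ≠ β := by
    intro h
    have hα2 : α ^ 2 = 1 := by rw [← hprodαβ, ← h, sq]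
    have hτα : τ * α = -2 := by linear_combination hαroot - hα2
    exact h5 (by linear_combination (τ * α - 2) * hτα - τ ^ 2 * hα2)
  have hne_root : ∀ z : ℂ, z ^ 2 + τ * z + 1 ≠ 0 → z ≠ α ∧ z ≠ β := by
    intro z hz
    constructor <;> intro h <;> apply hz <;> rw [h]
    exacts [hαroot, hβroot]
  have hαu : ∀ i, α ≠ u i := fun i h =>
    h4 i (by rw [← h]; linear_combination hαroot)
  have hβu : ∀ i, β ≠ u i := fun i h =>
    h4 i (by rw [← h]; linear_combination hβroot)
  have hmτu : ∀ i, ((-τ - u i) ^ 2 + τ * (-τ - u i) + 1) ≠ 0 := fun i h =>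
    h4 i (by linear_combination h)
  have hquad : ∀ z : ℂ, (z - α) * (z - β) = z ^ 2 + τ * z + 1 := fun z => by
    linear_combination (-z) * hsumαβ + hprodαβ
  -- quantities that are nonzero
  have hquadu : ∀ j, u j ^ 2 + τ * u j + 1 ≠ 0 := fun j h => h4 j (by linear_combination h)
  have hcard_r : #(univ : Finset (Fin r)) = r := by simp
  have hcard_er : ∀ j : Fin r, #((univ : Finset (Fin r)).erase j) = r - 1 := fun j => by
    rw [Finset.card_erase_of_mem (mem_univ j), hcard_r]
  -- the nodes
  set v : (Fin r ⊕ Fin r) ⊕ Bool → ℂ :=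
    Sum.elim (Sum.elim u (fun i => -τ - u i)) (fun b => if b then α else β) with hv_def
  have hmτu_ne : ∀ i j, (-τ - u i) ≠ u j := by
    intro i j h
    rcases eq_or_ne i j with rfl | hij
    · exact h3 i (by linear_combination -h)
    · exact h2 j i hij.symm (by linear_combination -h)
  have hv : Function.Injective v := by
    rintro ((i | i) | b) ((j | j) | c) h <;> simp only [hv_def, Sum.elim_inl, Sum.elim_inr] at h
    · rw [hinj h]
    · exact absurd h.symm (hmτu_ne j i)
    · exfalso; cases c <;> simp at h <;>
        [exact hβu i h.symm; exact hαu i h.symm]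
    · exact absurd h (hmτu_ne i j)
    · have : u i = u j := by linear_combination -h
      rw [hinj this]
    · exfalso; cases c <;> simp at h <;>
        [exact ((hne_root _ (hmτu i)).2 h).elim; exact ((hne_root _ (hmτu i)).1 h).elim]
    · exfalso; cases b <;> simp at h <;>
        [exact hβu j h; exact hαu j h]
    · exfalso; cases b <;> simp at h <;>
        [exact (hne_root _ (hmτu j)).2 h.symm; exact (hne_root _ (hmτu j)).1 h.symm]
    · cases b <;> cases c <;> simp at h ⊢ <;> [exact hαβ h.symm; exact hαβ h]
  have hcard : Fintype.card ((Fin r ⊕ Fin r) ⊕ Bool) = 2 * r + 2 := by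
    simp [Fintype.card_sum]; ring
  -- the polynomial
  set P : ℂ[X] := (C τ + 2 * X) * ∏ i, ((1 + C (u i) * (C τ + X)) * (1 - C (u i) * X))
    with hP_def
  have hlin : (C τ + 2 * X : ℂ[X]) = C 2 * X + C τ := by
    rw [map_ofNat C 2]; ring
  have hfac : ∀ i, ((1 + C (u i) * (C τ + X)) * (1 - C (u i) * X) : ℂ[X])
      = C (-(u i) ^ 2) * X ^ 2 + C (u i - u i * (1 + u i * τ)) * X + C (1 + u i * τ) := by
    intro i
    simp only [map_neg, map_pow, map_mul, map_add, map_sub, map_one]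
    ring
  have hfac_ne : ∀ i, (((1 + C (u i) * (C τ + X)) * (1 - C (u i) * X)) : ℂ[X]) ≠ 0 := by
    intro i
    rw [← leadingCoeff_ne_zero, hfac i,
      leadingCoeff_quadratic (by simpa using pow_ne_zero 2 (h6 i))]
    simpa using pow_ne_zero 2 (h6 i)
  have hprod_ne : (∏ i, ((1 + C (u i) * (C τ + X)) * (1 - C (u i) * X)) : ℂ[X]) ≠ 0 :=
    Finset.prod_ne_zero_iff.mpr fun i _ => hfac_ne i
  have hlin_ne : (C τ + 2 * X : ℂ[X]) ≠ 0 := by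
    rw [hlin, ← leadingCoeff_ne_zero, leadingCoeff_linear (by norm_num)]
    norm_num
  have hP_ne : P ≠ 0 := mul_ne_zero hlin_ne hprod_ne
  have hP_nd : P.natDegree = 2 * r + 1 := by
    rw [hP_def, natDegree_mul hlin_ne hprod_ne, hlin,
      natDegree_linear (by norm_num : (2 : ℂ) ≠ 0), natDegree_prod _ _ fun i _ => hfac_ne i]
    have : ∀ i : Fin r,
        (((1 + C (u i) * (C τ + X)) * (1 - C (u i) * X)) : ℂ[X]).natDegree = 2 := fun i => by
      rw [hfac i]; exact natDegree_quadratic (by simpa using pow_ne_zero 2 (h6 i))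
    simp only [this]
    rw [Finset.sum_const, hcard_r]
    ring
  have hP_coeff : P.coeff (2 * r + 1) = 2 * ∏ i, (-(u i) ^ 2) := by
    rw [← hP_nd, coeff_natDegree, hP_def, leadingCoeff_mul, leadingCoeff_prod, hlin,
      leadingCoeff_linear (by norm_num : (2 : ℂ) ≠ 0)]
    refine congrArg _ (Finset.prod_congr rfl fun i _ => ?_)
    rw [hfac i]; exact leadingCoeff_quadratic (by simpa using pow_ne_zero 2 (h6 i))
  have hP_deg : P.degree < ((Fintype.card ((Fin r ⊕ Fin r) ⊕ Bool) : ℕ) : WithBot ℕ) := by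
    rw [degree_eq_natDegree hP_ne, hP_nd, hcard]
    exact_mod_cast Nat.lt_succ_self _
  have heval : ∀ x : ℂ, P.eval x
      = (τ + 2 * x) * ∏ i, ((1 + u i * (τ + x)) * (1 - u i * x)) := by
    intro x
    rw [hP_def]
    simp [eval_prod]
  -- the interpolation identity
  have hkey := zkey v hv P hP_deg
  rw [hcard] at hkey
  -- split the sum
  rw [Fintype.sum_sum_type, Fintype.sum_sum_type, Fintype.sum_bool] at hkey
  -- terms at nodes u j
  have term_ll : ∀ j : Fin r,
      P.eval (v (Sum.inl (Sum.inl j))) / ∏ k ∈ univ.erase (Sum.inl (Sum.inl j)),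
        (v (Sum.inl (Sum.inl j)) - v k) = znumf τ u j / zdenf τ u j := by
    intro j
    have hFne : (∏ i ∈ univ.erase j, (u j + u i + τ)) ≠ 0 :=
      Finset.prod_ne_zero_iff.mpr fun i hi =>
        h2 j i (Finset.ne_of_mem_erase hi).symm
    have hEne : (∏ i ∈ univ.erase j, (u j - u i)) ≠ 0 :=
      Finset.prod_ne_zero_iff.mpr fun i hi =>
        sub_ne_zero_of_ne fun h => (Finset.ne_of_mem_erase hi).symm (hinj h)
    have e1 : P.eval (v (Sum.inl (Sum.inl j)))
        = (τ + 2 * u j) * ((1 + u j * τ + u j ^ 2)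
            * ∏ i ∈ univ.erase j, (1 + τ * u i + u i * u j)) * ∏ i, (1 - u j * u i) := by
      simp only [hv_def, Sum.elim_inl]
      rw [heval, Finset.prod_mul_distrib,
        ← Finset.mul_prod_erase univ (fun i => 1 + u i * (τ + u j)) (mem_univ j),
        Finset.prod_congr rfl (fun i _ => by ring :
          ∀ i ∈ univ.erase j, 1 + u i * (τ + u j) = 1 + τ * u i + u i * u j),
        Finset.prod_congr rfl (fun i _ => by ring :
          ∀ i ∈ (univ : Finset (Fin r)), 1 - u i * u j = 1 - u j * u i)]
      ring
    have e2 : ∏ k ∈ univ.erase (Sum.inl (Sum.inl j)), (v (Sum.inl (Sum.inl j)) - v k)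
        = (∏ i ∈ univ.erase j, (u j - u i))
            * ((2 * u j + τ) * ∏ i ∈ univ.erase j, (u j + u i + τ))
            * (u j ^ 2 + τ * u j + 1) := by
      rw [zsplit_ll]
      simp only [hv_def, Sum.elim_inl, Sum.elim_inr, if_true, if_false, Bool.false_eq_true]
      rw [← Finset.mul_prod_erase univ (fun i => u j - (-τ - u i)) (mem_univ j),
        Finset.prod_congr rfl (fun i _ => by ring :
          ∀ i ∈ univ.erase j, u j - (-τ - u i) = u j + u i + τ),
        hquad (u j)]
      ring
    rw [e1, e2, zdenf, Finset.prod_mul_distrib, znumf,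
      div_eq_div_iff
        (mul_ne_zero (mul_ne_zero hEne (mul_ne_zero (h3 j) hFne)) (hquadu j))
        (mul_ne_zero hFne hEne)]
    ring
  -- terms at nodes -τ - u j
  have hsgn : ((-1 : ℂ)) ^ r * (-1) ^ (r - 1) = -1 := by
    obtain ⟨k, rfl⟩ : ∃ k, r = k + 1 := ⟨r - 1, (Nat.succ_pred_eq_of_pos hr).symm⟩
    rw [Nat.add_sub_cancel, pow_succ, mul_comm ((-1 : ℂ) ^ k) (-1), mul_assoc, ← mul_pow]
    norm_num
  have term_lr : ∀ j : Fin r,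
      P.eval (v (Sum.inl (Sum.inr j))) / ∏ k ∈ univ.erase (Sum.inl (Sum.inr j)),
        (v (Sum.inl (Sum.inr j)) - v k) = znumf τ u j / zdenf τ u j := by
    intro j
    have hFne : (∏ i ∈ univ.erase j, (u j + u i + τ)) ≠ 0 :=
      Finset.prod_ne_zero_iff.mpr fun i hi =>
        h2 j i (Finset.ne_of_mem_erase hi).symm
    have hEne : (∏ i ∈ univ.erase j, (u j - u i)) ≠ 0 :=
      Finset.prod_ne_zero_iff.mpr fun i hi =>
        sub_ne_zero_of_ne fun h => (Finset.ne_of_mem_erase hi).symm (hinj h)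
    have e1 : P.eval (v (Sum.inl (Sum.inr j)))
        = -(τ + 2 * u j) * ((1 + u j * τ + u j ^ 2)
            * ∏ i ∈ univ.erase j, (1 + τ * u i + u i * u j)) * ∏ i, (1 - u j * u i) := by
      simp only [hv_def, Sum.elim_inl, Sum.elim_inr]
      rw [heval, Finset.prod_mul_distrib,
        Finset.prod_congr rfl (fun i _ => by ring :
          ∀ i ∈ (univ : Finset (Fin r)), 1 + u i * (τ + (-τ - u j)) = 1 - u j * u i),
        ← Finset.mul_prod_erase univ (fun i => 1 - u i * (-τ - u j)) (mem_univ j),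
        Finset.prod_congr rfl (fun i _ => by ring :
          ∀ i ∈ univ.erase j, 1 - u i * (-τ - u j) = 1 + τ * u i + u i * u j)]
      ring
    have e2 : ∏ k ∈ univ.erase (Sum.inl (Sum.inr j)), (v (Sum.inl (Sum.inr j)) - v k)
        = -((∏ i ∈ univ.erase j, (u j - u i))
            * ((2 * u j + τ) * ∏ i ∈ univ.erase j, (u j + u i + τ))
            * (u j ^ 2 + τ * u j + 1)) := by
      rw [zsplit_lr]
      simp only [hv_def, Sum.elim_inl, Sum.elim_inr, if_true, if_false, Bool.false_eq_true]
      rw [Finset.prod_congr rfl (fun i _ => by ring :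
          ∀ i ∈ (univ : Finset (Fin r)), -τ - u j - u i = -(u j + u i + τ)),
        zprod_neg univ (fun i => u j + u i + τ), hcard_r,
        ← Finset.mul_prod_erase univ (fun i => u j + u i + τ) (mem_univ j),
        Finset.prod_congr rfl (fun i _ => by ring :
          ∀ i ∈ univ.erase j, -τ - u j - (-τ - u i) = -(u j - u i)),
        zprod_neg (univ.erase j) (fun i => u j - u i), hcard_er j]
      have hq : (-τ - u j - α) * (-τ - u j - β) = u j ^ 2 + τ * u j + 1 := by
        rw [hquad (-τ - u j)]; ring
      rw [hq]
      calc ((-1 : ℂ)) ^ r * ((u j + u j + τ) * ∏ i ∈ univ.erase j, (u j + u i + τ))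
            * ((-1) ^ (r - 1) * ∏ i ∈ univ.erase j, (u j - u i)) * (u j ^ 2 + τ * u j + 1)
          = ((-1 : ℂ)) ^ r * (-1) ^ (r - 1)
              * (((u j + u j + τ) * ∏ i ∈ univ.erase j, (u j + u i + τ))
                * (∏ i ∈ univ.erase j, (u j - u i)) * (u j ^ 2 + τ * u j + 1)) := by ring
        _ = _ := by rw [hsgn]; ring
    rw [e1, e2, zdenf, Finset.prod_mul_distrib, znumf,
      div_eq_div_iff
        (neg_ne_zero.mpr
          (mul_ne_zero (mul_ne_zero hEne (mul_ne_zero (h3 j) hFne)) (hquadu j)))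
        (mul_ne_zero hFne hEne)]
    ring
  -- terms at α and β
  have hPαne : (∏ i, (α - u i)) ≠ 0 :=
    Finset.prod_ne_zero_iff.mpr fun i _ => sub_ne_zero_of_ne (hαu i)
  have hPβne : (∏ i, (β - u i)) ≠ 0 :=
    Finset.prod_ne_zero_iff.mpr fun i _ => sub_ne_zero_of_ne (hβu i)
  have hαβ' : α - β ≠ 0 := sub_ne_zero_of_ne hαβ
  have hab : α ^ r * β ^ r = 1 := by rw [← mul_pow, hprodαβ, one_pow]
  have hm1 : ((-1 : ℂ)) ^ r * (-1) ^ r = 1 := by rw [← mul_pow]; norm_num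
  have term_rt :
      P.eval (v (Sum.inr true)) / ∏ k ∈ univ.erase (Sum.inr true),
        (v (Sum.inr true) - v k) = (-1 : ℂ) ^ r := by
    have e1 : P.eval (v (Sum.inr true))
        = (α - β) * (β ^ r * ∏ i, (α - u i)) * (α ^ r * ∏ i, (β - u i)) := by
      simp only [hv_def, Sum.elim_inr, if_true]
      rw [heval, Finset.prod_mul_distrib,
        Finset.prod_congr rfl (fun i _ => by linear_combination u i * hsumαβ - hprodαβ :
          ∀ i ∈ (univ : Finset (Fin r)), 1 + u i * (τ + α) = β * (α - u i)),
        Finset.prod_congr rfl (fun i _ => by linear_combination - hprodαβ :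
          ∀ i ∈ (univ : Finset (Fin r)), 1 - u i * α = α * (β - u i)),
        zprod_cmul univ β (fun i => α - u i), zprod_cmul univ α (fun i => β - u i), hcard_r]
      have : τ + 2 * α = α - β := by linear_combination hsumαβ
      rw [this]
      ring
    have e2 : ∏ k ∈ univ.erase (Sum.inr true), (v (Sum.inr true) - v k)
        = (∏ i, (α - u i)) * ((-1) ^ r * ∏ i, (β - u i)) * (α - β) := by
      rw [zsplit_rt]
      simp only [hv_def, Sum.elim_inl, Sum.elim_inr, if_true, if_false, Bool.false_eq_true]
      rw [Finset.prod_congr rfl (fun i _ => by linear_combination hsumαβ :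
          ∀ i ∈ (univ : Finset (Fin r)), α - (-τ - u i) = -(β - u i)),
        zprod_neg univ (fun i => β - u i), hcard_r]
    rw [e1, e2, div_eq_iff
      (mul_ne_zero (mul_ne_zero hPαne (mul_ne_zero (pow_ne_zero r (by norm_num)) hPβne)) hαβ')]
    linear_combination ((α - β) * (∏ i, (α - u i)) * (∏ i, (β - u i))) * hab
      - ((α - β) * (∏ i, (α - u i)) * (∏ i, (β - u i))) * hm1
  have term_rf :
      P.eval (v (Sum.inr false)) / ∏ k ∈ univ.erase (Sum.inr false),
        (v (Sum.inr false) - v k) = (-1 : ℂ) ^ r := by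
    have e1 : P.eval (v (Sum.inr false))
        = (β - α) * (α ^ r * ∏ i, (β - u i)) * (β ^ r * ∏ i, (α - u i)) := by
      simp only [hv_def, Sum.elim_inr, if_false, Bool.false_eq_true]
      rw [heval, Finset.prod_mul_distrib,
        Finset.prod_congr rfl (fun i _ => by linear_combination u i * hsumαβ - hprodαβ :
          ∀ i ∈ (univ : Finset (Fin r)), 1 + u i * (τ + β) = α * (β - u i)),
        Finset.prod_congr rfl (fun i _ => by linear_combination - hprodαβ :
          ∀ i ∈ (univ : Finset (Fin r)), 1 - u i * β = β * (α - u i)),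
        zprod_cmul univ α (fun i => β - u i), zprod_cmul univ β (fun i => α - u i), hcard_r]
      have : τ + 2 * β = β - α := by linear_combination hsumαβ
      rw [this]
      ring
    have e2 : ∏ k ∈ univ.erase (Sum.inr false), (v (Sum.inr false) - v k)
        = (∏ i, (β - u i)) * ((-1) ^ r * ∏ i, (α - u i)) * (β - α) := by
      rw [zsplit_rf]
      simp only [hv_def, Sum.elim_inl, Sum.elim_inr, if_true, if_false, Bool.false_eq_true]
      rw [Finset.prod_congr rfl (fun i _ => by linear_combination hsumαβ :
          ∀ i ∈ (univ : Finset (Fin r)), β - (-τ - u i) = -(α - u i)),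
        zprod_neg univ (fun i => α - u i), hcard_r]
    have hβα' : β - α ≠ 0 := sub_ne_zero_of_ne (Ne.symm hαβ)
    rw [e1, e2, div_eq_iff
      (mul_ne_zero (mul_ne_zero hPβne (mul_ne_zero (pow_ne_zero r (by norm_num)) hPαne)) hβα')]
    linear_combination ((β - α) * (∏ i, (α - u i)) * (∏ i, (β - u i))) * hab
      - ((β - α) * (∏ i, (α - u i)) * (∏ i, (β - u i))) * hm1
  -- assemble
  rw [Finset.sum_congr rfl (fun j _ => term_ll j),
    Finset.sum_congr rfl (fun j _ => term_lr j), term_rt, term_rf] at hkey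
  have hcoeff2 : P.coeff (2 * r + 2 - 1) = 2 * ((-1) ^ r * ∏ i, u i ^ 2) := by
    have : (2 * r + 2 - 1) = 2 * r + 1 := rfl
    rw [this, hP_coeff,
      Finset.prod_congr rfl (fun i _ => (neg_one_mul ((u i) ^ 2)).symm :
        ∀ i ∈ (univ : Finset (Fin r)), -(u i) ^ 2 = (-1) * (u i) ^ 2),
      Finset.prod_mul_distrib, Finset.prod_const, hcard_r]
  rw [hcoeff2] at hkey
  have hsgn2 : ((-1 : ℂ)) ^ (r - 1) * (-1) = (-1) ^ r := by
    obtain ⟨k, rfl⟩ : ∃ k, r = k + 1 := ⟨r - 1, (Nat.succ_pred_eq_of_pos hr).symm⟩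
    rw [Nat.add_sub_cancel, pow_succ]
  have h2S : (2 : ℂ) * (∑ j, znumf τ u j / zdenf τ u j)
      = 2 * ((-1 : ℂ) ^ (r - 1) * (1 - ∏ i, u i ^ 2)) := by
    linear_combination hkey + (2 * (1 - ∏ i, u i ^ 2)) * hsgn2
  exact mul_left_cancel₀ (two_ne_zero) h2S

lemma znonzero_of_eval {σ : Type*} (p : σ → ℂ) {f : MvPolynomial σ ℂ}
    (h : MvPolynomial.eval p f ≠ 0) : f ≠ 0 := fun hf => h (by simp [hf])

lemma zsum_mul {K : Type*} [Field K] {r : ℕ} (τ : K) (u : Fin r → K)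
    (hden : ∀ j, zdenf τ u j ≠ 0) :
    (∑ j, znumf τ u j / zdenf τ u j) * ∏ j, zdenf τ u j = zlhsf τ u := by
  rw [Finset.sum_mul, zlhsf]
  refine Finset.sum_congr rfl fun j _ => ?_
  rw [← Finset.mul_prod_erase univ (zdenf τ u) (mem_univ j), div_mul_eq_mul_div,
    show znumf τ u j * (zdenf τ u j * ∏ x ∈ univ.erase j, zdenf τ u x)
      = (znumf τ u j * ∏ x ∈ univ.erase j, zdenf τ u x) * zdenf τ u j from by ring,
    mul_div_cancel_right₀ _ (hden j)]

lemma zpoly_id (r : ℕ) (hr : 1 ≤ r) :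
    zlhsf (MvPolynomial.X none : MvPolynomial (Option (Fin r)) ℤ) (fun i => MvPolynomial.X (some i))
      = zrhsf (MvPolynomial.X none) (fun i => MvPolynomial.X (some i)) := by
  classical
  apply MvPolynomial.map_injective (Int.castRingHom ℂ) Int.cast_injective
  rw [map_zlhsf, map_zrhsf]
  simp only [MvPolynomial.map_X]
  have hcomp : ((MvPolynomial.map (Int.castRingHom ℂ)) ∘
      (fun i : Fin r => (MvPolynomial.X (some i) : MvPolynomial (Option (Fin r)) ℤ)))
      = fun i : Fin r => (MvPolynomial.X (some i) : MvPolynomial (Option (Fin r)) ℂ) := by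
    funext i; simp
  rw [hcomp]
  -- now a polynomial identity over ℂ
  set TX : MvPolynomial (Option (Fin r)) ℂ := MvPolynomial.X none with hTX
  set UX : Fin r → MvPolynomial (Option (Fin r)) ℂ := fun i => MvPolynomial.X (some i) with hUX
  set G : MvPolynomial (Option (Fin r)) ℂ :=
    (∏ i, ∏ j ∈ univ.erase i, (UX i - UX j))
    * ((∏ i, ∏ j ∈ univ.erase i, (UX i + UX j + TX))
    * ((∏ j, (2 * UX j + TX))
    * ((∏ j, (1 + TX * UX j + UX j ^ 2))
    * ((TX ^ 2 - MvPolynomial.C 4)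
    * (∏ j, UX j))))) with hG
  have hGne : G ≠ 0 := by
    rw [hG]
    refine mul_ne_zero ?_ (mul_ne_zero ?_ (mul_ne_zero ?_ (mul_ne_zero ?_ (mul_ne_zero ?_ ?_))))
    · refine Finset.prod_ne_zero_iff.mpr fun i _ =>
        Finset.prod_ne_zero_iff.mpr fun j hj => ?_
      refine znonzero_of_eval (fun k => if k = some i then 1 else 0) ?_
      simp [hUX, Option.some.injEq, Finset.ne_of_mem_erase hj]
    · refine Finset.prod_ne_zero_iff.mpr fun i _ =>
        Finset.prod_ne_zero_iff.mpr fun j hj => ?_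
      refine znonzero_of_eval (fun k => if k = some i then 1 else 0) ?_
      simp [hUX, hTX, Option.some.injEq, Finset.ne_of_mem_erase hj]
    · refine Finset.prod_ne_zero_iff.mpr fun j _ => ?_
      refine znonzero_of_eval (fun k => if k = some j then 1 else 0) ?_
      simp [hUX, hTX]
    · refine Finset.prod_ne_zero_iff.mpr fun j _ => ?_
      refine znonzero_of_eval (fun _ => 0) ?_
      simp [hUX, hTX]
    · refine znonzero_of_eval (fun _ => 0) ?_
      simp [hTX]
    · refine Finset.prod_ne_zero_iff.mpr fun j _ => ?_
      refine znonzero_of_eval (fun k => if k = some j then 1 else 0) ?_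
      simp [hUX]
  have hzero : (zlhsf TX UX - zrhsf TX UX) * G = 0 := by
    apply MvPolynomial.funext
    intro x
    rw [map_zero, map_mul, map_sub]
    rcases eq_or_ne (MvPolynomial.eval x G) 0 with hx | hx
    · rw [hx, mul_zero]
    · -- all genericity conditions hold at x
      have hmain : MvPolynomial.eval x (zlhsf TX UX) = MvPolynomial.eval x (zrhsf TX UX) := by
        rw [map_zlhsf, map_zrhsf]
        have h1 : MvPolynomial.eval x TX = x none := by simp [hTX]
        have hcompu : (MvPolynomial.eval x) ∘ UX = fun i => x (some i) := by
          funext i; simp [hUX]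
        rw [h1, hcompu]
        rw [hG] at hx
        simp only [hUX, hTX, map_mul, map_prod, map_sub, map_add, map_pow, map_one, map_ofNat,
          MvPolynomial.eval_X, MvPolynomial.eval_C, mul_ne_zero_iff,
          Finset.prod_ne_zero_iff] at hx
        obtain ⟨hA, hB, hC, hD, hE, hF⟩ := hx
        have hinj : Function.Injective (fun i : Fin r => x (some i)) := by
          intro a b hab
          by_contra hne
          exact hA a (mem_univ a) b (Finset.mem_erase.mpr ⟨Ne.symm hne, mem_univ b⟩)
            (sub_eq_zero_of_eq hab)
        have h2 : ∀ i j : Fin r, i ≠ j → x (some i) + x (some j) + x none ≠ 0 := fun i j hij =>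
          hB i (mem_univ i) j (Finset.mem_erase.mpr ⟨hij.symm, mem_univ j⟩)
        have heq := zcomplex_case hr (x none) (fun i => x (some i)) hinj h2
          (fun j => hC j (mem_univ j)) (fun j => hD j (mem_univ j)) hE (fun j => hF j (mem_univ j))
        have hden : ∀ j, zdenf (x none) (fun i => x (some i)) j ≠ 0 := by
          intro j
          refine Finset.prod_ne_zero_iff.mpr fun i hi => mul_ne_zero ?_ ?_
          · exact h2 j i (Finset.ne_of_mem_erase hi).symm
          · exact sub_ne_zero_of_ne fun h => (Finset.ne_of_mem_erase hi).symm (hinj h)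
        have hmul := zsum_mul (x none) (fun i => x (some i)) hden
        rw [heq] at hmul
        rw [← hmul, zrhsf]
      rw [hmain, sub_self, zero_mul]
  rcases mul_eq_zero.mp hzero with h | h
  · exact sub_eq_zero.mp h
  · exact absurd h hGne

/-- Zeilberger's identity: for pairwise distinct u₁,…,u_r in a field K with
uᵢ + uⱼ + τ ≠ 0 for i ≠ j,
Σⱼ [∏ᵢ (1 − uⱼuᵢ) · ∏_{i≠j} (1 + τuᵢ + uᵢuⱼ)] / [∏_{i≠j} (uⱼ+uᵢ+τ)(uⱼ−uᵢ)]
= (−1)^(r−1) (1 − ∏ᵢ uᵢ²). -/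
theorem stmt3 (K : Type*) [Field K] (τ : K) (r : ℕ) (hr : 1 ≤ r) (u : Fin r → K)
    (hinj : Function.Injective u)
    (hsum : ∀ i j : Fin r, i ≠ j → u i + u j + τ ≠ 0) :
    ∑ j : Fin r,
      ((∏ i : Fin r, (1 - u j * u i)) *
          ∏ i ∈ Finset.univ.erase j, (1 + τ * u i + u i * u j)) /
        ∏ i ∈ Finset.univ.erase j, ((u j + u i + τ) * (u j - u i)) =
    (-1 : K) ^ (r - 1) * (1 - ∏ i : Fin r, (u i) ^ 2) := by
  classical
  have hden : ∀ j, zdenf τ u j ≠ 0 := by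
    intro j
    refine Finset.prod_ne_zero_iff.mpr fun i hi => mul_ne_zero ?_ ?_
    · exact hsum j i (Finset.ne_of_mem_erase hi).symm
    · exact sub_ne_zero_of_ne fun h => (Finset.ne_of_mem_erase hi).symm (hinj h)
  have hcleared : zlhsf τ u = zrhsf τ u := by
    have h := zpoly_id r hr
    have happ := congrArg
      (MvPolynomial.aeval (fun o : Option (Fin r) => o.elim τ u) :
        MvPolynomial (Option (Fin r)) ℤ →ₐ[ℤ] K).toRingHom h
    rw [map_zlhsf, map_zrhsf] at happ
    have h1 : (MvPolynomial.aeval (fun o : Option (Fin r) => o.elim τ u) :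
        MvPolynomial (Option (Fin r)) ℤ →ₐ[ℤ] K).toRingHom
        (MvPolynomial.X none) = τ := by simp
    have h2 : ((MvPolynomial.aeval (fun o : Option (Fin r) => o.elim τ u) :
        MvPolynomial (Option (Fin r)) ℤ →ₐ[ℤ] K).toRingHom ∘
          fun i : Fin r => MvPolynomial.X (some i)) = u := by
      funext i; simp
    rwa [h1, h2] at happ
  have hprodne : (∏ j, zdenf τ u j) ≠ 0 :=
    Finset.prod_ne_zero_iff.mpr fun j _ => hden j
  have hmul := zsum_mul τ u hden
  show ∑ j : Fin r, znumf τ u j / zdenf τ u j = (-1 : K) ^ (r - 1) * (1 - ∏ i : Fin r, (u i) ^ 2)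
  apply mul_right_cancel₀ hprodne
  rw [hmul, hcleared, zrhsf]
end

section
/- For all integers s ≥ 0 and t ≥ 0, setting p = 2s+1 and r = 2t, the following identity of rational numbers holds: ∏_{i=0}^{r−1} (3p+3i+1)! / ( (3p+2i+1)! (p+2i)! ) · ∏_{i=0}^{t−1} (2p+2i+1)! (2i)! = [ A(p+r) · S(2(p+r), p) ] / [ A(p) · S(2p, p) ], where A(n) = ∏_{k=0}^{n−1} (3k+1)!/(n+k)! and, for odd p, S(L,p) = ∏_{ℓ=1}^{(p+1)/2} ∏_{k=ℓ}^{2ℓ−2} (L²−4k²) / ∏_{ℓ=0}^{(p−3)/2} (L² − (2ℓ+1)²)^{(p−1)/2−ℓ}. -/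
open Finset

/-- The alternating sign matrix numbers A(n) = ∏_{k=0}^{n-1} (3k+1)!/(n+k)! (as a rational). -/
def ASM (n : ℕ) : ℚ :=
  ∏ k ∈ Finset.range n, ((3 * k + 1).factorial : ℚ) / ((n + k).factorial : ℚ)

/-- S(L, p) for even p = 2s:
S(L,p) = ∏_{ℓ=1}^{p/2} ∏_{k=ℓ}^{2ℓ−1} (L²−4k²) / ∏_{ℓ=0}^{p/2−1} (L²−(2ℓ+1)²)^(p/2−ℓ). -/
def SEven (L : ℕ) (s : ℕ) : ℚ :=
  (∏ l ∈ Finset.Icc 1 s, ∏ k ∈ Finset.Icc l (2 * l - 1),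
      ((L : ℚ) ^ 2 - 4 * (k : ℚ) ^ 2)) /
    ∏ l ∈ Finset.range s, ((L : ℚ) ^ 2 - (2 * (l : ℚ) + 1) ^ 2) ^ (s - l)

/-- S(L, p) for odd p = 2s+1:
S(L,p) = ∏_{ℓ=1}^{(p+1)/2} ∏_{k=ℓ}^{2ℓ−2} (L²−4k²) / ∏_{ℓ=0}^{(p−3)/2} (L²−(2ℓ+1)²)^((p−1)/2−ℓ). -/
def SOdd (L : ℕ) (s : ℕ) : ℚ :=
  (∏ l ∈ Finset.Icc 1 (s + 1), ∏ k ∈ Finset.Icc l (2 * l - 2),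
      ((L : ℚ) ^ 2 - 4 * (k : ℚ) ^ 2)) /
    ∏ l ∈ Finset.range s, ((L : ℚ) ^ 2 - (2 * (l : ℚ) + 1) ^ 2) ^ (s - l)

/-! ### Auxiliary machinery -/

def ascQ (a m : ℕ) : ℚ := ∏ j ∈ range m, ((a + 1 + j : ℕ) : ℚ)

lemma ascQ_succ (a m : ℕ) : ascQ a (m+1) = ascQ a m * ((a + 1 + m : ℕ) : ℚ) :=
  prod_range_succ _ _

lemma factQ_pos (a : ℕ) : (0:ℚ) < (a.factorial : ℚ) := by
  exact_mod_cast a.factorial_pos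

lemma factQ_ne (a : ℕ) : ((a.factorial : ℚ)) ≠ 0 := (factQ_pos a).ne'

lemma fact_ascQ (a m : ℕ) : (((a + m).factorial : ℕ) : ℚ) = (a.factorial : ℚ) * ascQ a m := by
  induction m with
  | zero => simp [ascQ]
  | succ m ih =>
      rw [show a + (m+1) = (a+m)+1 from rfl, Nat.factorial_succ, ascQ_succ]
      push_cast
      rw [ih]
      ring

lemma ascQ_eq (a m b : ℕ) (h : a + m = b) :
    ascQ a m = ((b.factorial : ℚ)) / (a.factorial : ℚ) := by
  subst h
  rw [eq_div_iff (factQ_ne a), fact_ascQ]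
  ring

def oddP (b m : ℕ) : ℚ := ∏ j ∈ range m, ((2*b + 1 + 2*j : ℕ) : ℚ)

lemma oddP_mul (b m : ℕ) : oddP b m * ((2:ℚ)^m * ascQ b m) = ascQ (2*b) (2*m) := by
  induction m with
  | zero => simp [oddP, ascQ]
  | succ m ih =>
      have l1 : oddP b (m+1) = oddP b m * ((2*b+1+2*m : ℕ) : ℚ) := prod_range_succ _ _
      rw [show 2*(m+1) = (2*m)+1+1 from by ring, ascQ_succ (2*b) ((2*m)+1),
        ascQ_succ (2*b) (2*m), ← ih, l1, ascQ_succ b m, pow_succ]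
      push_cast
      ring

lemma oddP_eq (b m B C D : ℕ) (h1 : 2*b+2*m = B) (h2 : 2*b = C) (h3 : b+m = D) :
    oddP b m = ((B.factorial : ℚ) * (b.factorial : ℚ)) /
      ((2:ℚ)^m * (C.factorial : ℚ) * (D.factorial : ℚ)) := by
  have h := oddP_mul b m
  rw [ascQ_eq b m D h3, ascQ_eq (2*b) (2*m) B (by omega)] at h
  rw [← h2]
  rw [eq_div_iff (by
    apply mul_ne_zero (mul_ne_zero (pow_ne_zero _ two_ne_zero) (factQ_ne _)) (factQ_ne _))]
  field_simp at h ⊢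
  linear_combination h

def PF (a b m : ℕ) : ℚ := ∏ j ∈ range m, (((a + b*j).factorial : ℕ) : ℚ)

lemma PF_succ (a b m : ℕ) : PF a b (m+1) = PF a b m * (((a + b*m).factorial : ℕ) : ℚ) :=
  prod_range_succ _ _

lemma PF_pos (a b m : ℕ) : 0 < PF a b m := by
  apply prod_pos; intro j _
  exact_mod_cast (a + b*j).factorial_pos

lemma PF_ne (a b m : ℕ) : PF a b m ≠ 0 := (PF_pos a b m).ne'

lemma PF_shift (a b m : ℕ) :
    PF (a+b) b m = PF a b m * (((a + b*m).factorial : ℕ) : ℚ) / ((a.factorial : ℚ)) := by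
  have h1 : PF a b (m+1) = PF (a+b) b m * ((a.factorial : ℚ)) := by
    rw [PF, prod_range_succ']
    congr 1
    apply prod_congr rfl; intro j _
    congr 2
    ring
  rw [eq_div_iff (factQ_ne a), ← h1, PF_succ]

lemma prodfactQ_ne (m : ℕ) (g : ℕ → ℕ) : (∏ k ∈ range m, ((g k).factorial : ℚ)) ≠ 0 := by
  apply prod_ne_zero_iff.mpr
  intro k _
  exact factQ_ne _

lemma ASM_eq (m : ℕ) : ASM m =
    (∏ k ∈ range m, (((3*k+1).factorial : ℕ) : ℚ)) /
      (∏ k ∈ range m, (((m+k).factorial : ℕ) : ℚ)) := by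
  rw [ASM, prod_div_distrib]

lemma ASM_pos (n : ℕ) : 0 < ASM n := by
  apply prod_pos; intro k _
  apply div_pos <;> exact_mod_cast Nat.factorial_pos _

lemma ASM_succ (n : ℕ) : ASM (n+1) = ASM n *
    ((((3*n+1).factorial : ℕ) : ℚ) * ((n.factorial : ℕ) : ℚ)) /
    ((((2*n).factorial : ℕ) : ℚ) * (((2*n+1).factorial : ℕ) : ℚ)) := by
  have den : (∏ k ∈ range (n+1), ((((n+1)+k).factorial : ℕ) : ℚ)) * ((n.factorial : ℕ) : ℚ)
      = (∏ k ∈ range n, (((n+k).factorial : ℕ) : ℚ)) *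
        (((2*n).factorial : ℕ) : ℚ) * (((2*n+1).factorial : ℕ) : ℚ) := by
    have h := prod_range_succ' (fun k => (((n+k).factorial : ℕ) : ℚ)) (n+1)
    have h2 : (∏ k ∈ range (n+1), (((n+(k+1)).factorial : ℕ) : ℚ))
        = ∏ k ∈ range (n+1), ((((n+1)+k).factorial : ℕ) : ℚ) := by
      apply prod_congr rfl; intro k _; congr 2; ring
    simp only [h2, Nat.add_zero] at h
    rw [← h, prod_range_succ, prod_range_succ,
      show n + (n+1) = 2*n+1 from by ring, show n + n = 2*n from by ring]
  rw [ASM_eq, ASM_eq, prod_range_succ]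
  have hd1 : (∏ k ∈ range (n+1), ((((n+1)+k).factorial : ℕ) : ℚ)) ≠ 0 := prodfactQ_ne _ _
  have hd2 : (∏ k ∈ range n, (((n+k).factorial : ℕ) : ℚ)) ≠ 0 := prodfactQ_ne _ _
  field_simp
  linear_combination (-1 : ℚ) * den

def Fdef (s t : ℕ) : ℚ :=
  (∏ j ∈ range s, (16:ℚ)^(j+1)) *
  (PF (s+2*t) 1 s * PF (2*s+2*t+3) 2 s * PF (2*s+4*t+2) 2 s) /
  (PF (2*t) 2 s * PF (s+2*t+1) 1 s * PF (4*s+4*t+4) 2 s)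

lemma prod16_pos (s : ℕ) : 0 < ∏ j ∈ range s, (16:ℚ)^(j+1) := by
  apply prod_pos; intro j _; positivity

lemma Fdef_pos (s t : ℕ) : 0 < Fdef s t := by
  apply div_pos
  · exact mul_pos (prod16_pos s) (mul_pos (mul_pos (PF_pos _ _ _) (PF_pos _ _ _)) (PF_pos _ _ _))
  · exact mul_pos (mul_pos (PF_pos _ _ _) (PF_pos _ _ _)) (PF_pos _ _ _)
lemma sodd_succ (L s : ℕ) : SOdd L (s+1) = SOdd L s *
    ((∏ k ∈ Icc (s+2) (2*s+2), ((L:ℚ)^2 - 4*(k:ℚ)^2)) /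
     (∏ l ∈ range (s+1), ((L:ℚ)^2 - (2*(l:ℚ)+1)^2))) := by
  rw [SOdd, SOdd, div_mul_div_comm]
  have hnum : ∏ l ∈ Icc 1 (s+1+1), ∏ k ∈ Icc l (2*l-2), ((L:ℚ)^2 - 4*(k:ℚ)^2)
      = (∏ l ∈ Icc 1 (s+1), ∏ k ∈ Icc l (2*l-2), ((L:ℚ)^2 - 4*(k:ℚ)^2)) *
        (∏ k ∈ Icc (s+2) (2*s+2), ((L:ℚ)^2 - 4*(k:ℚ)^2)) := by
    rw [prod_Icc_succ_top (by omega : 1 ≤ (s+1)+1)]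
    rw [show 2*(s+1+1)-2 = 2*s+2 from by omega, show s+1+1 = s+2 from rfl]
  have hden : ∏ l ∈ range (s+1), ((L:ℚ)^2 - (2*(l:ℚ)+1)^2) ^ (s+1-l)
      = (∏ l ∈ range s, ((L:ℚ)^2 - (2*(l:ℚ)+1)^2) ^ (s-l)) *
        (∏ l ∈ range (s+1), ((L:ℚ)^2 - (2*(l:ℚ)+1)^2)) := by
    have h1 : ∏ l ∈ range (s+1), ((L:ℚ)^2 - (2*(l:ℚ)+1)^2) ^ (s+1-l)
        = ∏ l ∈ range (s+1), (((L:ℚ)^2 - (2*(l:ℚ)+1)^2) ^ (s-l) * ((L:ℚ)^2 - (2*(l:ℚ)+1)^2)) := by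
      apply prod_congr rfl
      intro l hl
      simp only [mem_range] at hl
      rw [show s+1-l = (s-l)+1 from by omega, pow_succ]
    rw [h1, prod_mul_distrib]
    congr 1
    rw [prod_range_succ, Nat.sub_self, pow_zero, mul_one]
  rw [hnum, hden]

lemma Beval (s t : ℕ) :
    (∏ k ∈ Icc (s+2) (2*s+2), (((2*(2*s+3+2*t) : ℕ):ℚ)^2 - 4*(k:ℚ)^2))
    = (2:ℚ)^(s+1) * 2^(s+1) * ascQ (2*t) (s+1) * ascQ (3*s+2*t+4) (s+1) := by
  rw [← Finset.Ico_add_one_right_eq_Icc, prod_Ico_eq_prod_range,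
    show (2*s+2+1) - (s+2) = s+1 from by omega]
  have h1 : ∀ j ∈ range (s+1), (((2*(2*s+3+2*t) : ℕ):ℚ)^2 - 4*((s+2+j : ℕ):ℚ)^2)
      = ((2:ℚ) * ((s+2*t+1-j : ℕ):ℚ)) * ((2:ℚ) * ((3*s+2*t+4+1+j : ℕ):ℚ)) := by
    intro j hj
    simp only [mem_range] at hj
    rw [Nat.cast_sub (by omega : j ≤ s+2*t+1)]
    push_cast
    ring
  rw [prod_congr rfl h1, prod_mul_distrib, prod_mul_distrib, prod_mul_distrib,
    prod_const, card_range]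
  have hrefl : ∏ j ∈ range (s+1), ((s+2*t+1-j : ℕ):ℚ) = ascQ (2*t) (s+1) := by
    rw [ascQ, ← prod_range_reflect (fun j => ((2*t+1+j : ℕ):ℚ)) (s+1)]
    apply prod_congr rfl
    intro j hj
    simp only [mem_range] at hj
    congr 1
    omega
  rw [hrefl]
  rw [show ascQ (3*s+2*t+4) (s+1) = ∏ j ∈ range (s+1), ((3*s+2*t+4+1+j : ℕ):ℚ) from rfl]
  ring

lemma Eeval (s t : ℕ) :
    (∏ l ∈ range (s+1), (((2*(2*s+3+2*t) : ℕ):ℚ)^2 - (2*(l:ℚ)+1)^2))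
    = oddP (s+2*t+2) (s+1) * oddP (2*s+2*t+3) (s+1) := by
  have h1 : ∀ l ∈ range (s+1), (((2*(2*s+3+2*t) : ℕ):ℚ)^2 - (2*(l:ℚ)+1)^2)
      = ((4*s+4*t+5-2*l : ℕ):ℚ) * ((2*(2*s+2*t+3)+1+2*l : ℕ):ℚ) := by
    intro l hl
    simp only [mem_range] at hl
    rw [Nat.cast_sub (by omega : 2*l ≤ 4*s+4*t+5)]
    push_cast
    ring
  rw [prod_congr rfl h1, prod_mul_distrib]
  have hrefl : ∏ l ∈ range (s+1), ((4*s+4*t+5-2*l : ℕ):ℚ) = oddP (s+2*t+2) (s+1) := by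
    rw [oddP, ← prod_range_reflect (fun j => ((2*(s+2*t+2)+1+2*j : ℕ):ℚ)) (s+1)]
    apply prod_congr rfl
    intro l hl
    simp only [mem_range] at hl
    congr 1
    omega
  rw [hrefl]
  rfl

lemma soddClosed (s t : ℕ) : SOdd (2*(2*s+1+2*t)) s = Fdef s t := by
  induction s generalizing t with
  | zero =>
      norm_num [SOdd, Fdef, PF]
  | succ s ih =>
      have hS : SOdd (2*(2*(s+1)+1+2*t)) s = Fdef s (t+1) := by
        rw [show 2*(2*(s+1)+1+2*t) = 2*(2*s+1+2*(t+1)) from by ring]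
        exact ih (t+1)
      rw [sodd_succ, hS, show 2*(2*(s+1)+1+2*t) = 2*(2*s+3+2*t) from by ring,
        Beval, Eeval]
      -- conversions to factorials
      have o1 : oddP (s+2*t+2) (s+1) =
          (((4*s+4*t+6).factorial : ℚ) * ((s+2*t+2).factorial : ℚ)) /
          ((2:ℚ)^(s+1) * ((2*s+4*t+4).factorial : ℚ) * ((2*s+2*t+3).factorial : ℚ)) :=
        oddP_eq _ _ _ _ _ (by ring) (by ring) (by ring)
      have o2 : oddP (2*s+2*t+3) (s+1) =
          (((6*s+4*t+8).factorial : ℚ) * ((2*s+2*t+3).factorial : ℚ)) /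
          ((2:ℚ)^(s+1) * ((4*s+4*t+6).factorial : ℚ) * ((3*s+2*t+4).factorial : ℚ)) :=
        oddP_eq _ _ _ _ _ (by ring) (by ring) (by ring)
      have a1 : ascQ (2*t) (s+1) = ((s+2*t+1).factorial : ℚ) / ((2*t).factorial : ℚ) :=
        ascQ_eq _ _ _ (by ring)
      have a2 : ascQ (3*s+2*t+4) (s+1) =
          ((4*s+2*t+5).factorial : ℚ) / ((3*s+2*t+4).factorial : ℚ) :=
        ascQ_eq _ _ _ (by ring)
      rw [o1, o2, a1, a2, Fdef, Fdef]
      -- normalize PF arguments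
      simp only [show (s+1)+2*t = s+2*t+1 from by ring,
        show 2*(s+1)+2*t+3 = 2*s+2*t+5 from by ring,
        show 2*(s+1)+4*t+2 = 2*s+4*t+4 from by ring,
        show (s+1)+2*t+1 = s+2*t+2 from by ring,
        show 4*(s+1)+4*t+4 = 4*s+4*t+8 from by ring,
        show s+2*(t+1) = s+2*t+2 from by ring,
        show 2*s+2*(t+1)+3 = 2*s+2*t+5 from by ring,
        show 2*s+4*(t+1)+2 = 2*s+4*t+6 from by ring,
        show 2*(t+1) = 2*t+2 from by ring,
        show s+2*(t+1)+1 = s+2*t+3 from by ring,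
        show 4*s+4*(t+1)+4 = 4*s+4*t+8 from by ring,
        show s+(2*t+2) = s+2*t+2 from by ring,
        show 2*s+(2*t+2)+3 = 2*s+2*t+5 from by ring,
        show s+(2*t+2)+1 = s+2*t+3 from by ring,
        show 2*s+(4*t+4)+2 = 2*s+4*t+6 from by ring,
        show 4*s+(4*t+4)+4 = 4*s+4*t+8 from by ring]
      -- PF relations
      have e1 : PF (s+2*t+1) 1 (s+1) = PF (s+2*t+2) 1 s * ((s+2*t+1).factorial : ℚ) := by
        have h1 : PF (s+2*t+1) 1 (s+1)
            = PF (s+2*t+1) 1 s * (((2*s+2*t+1).factorial : ℕ) : ℚ) := by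
          rw [PF_succ, show s+2*t+1+1*s = 2*s+2*t+1 from by ring]
        have h2 := PF_shift (s+2*t+1) 1 s
        rw [show s+2*t+1+1 = s+2*t+2 from by ring,
          show s+2*t+1+1*s = 2*s+2*t+1 from by ring] at h2
        rw [h1, h2]
        field_simp
      have e2 : PF (2*s+2*t+5) 2 (s+1)
          = PF (2*s+2*t+5) 2 s * ((4*s+2*t+5).factorial : ℚ) := by
        rw [PF_succ, show 2*s+2*t+5+2*s = 4*s+2*t+5 from by ring]
      have e3 : PF (2*s+4*t+4) 2 (s+1) = PF (2*s+4*t+6) 2 s * ((2*s+4*t+4).factorial : ℚ) := by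
        have h1 : PF (2*s+4*t+4) 2 (s+1)
            = PF (2*s+4*t+4) 2 s * (((4*s+4*t+4).factorial : ℕ) : ℚ) := by
          rw [PF_succ, show 2*s+4*t+4+2*s = 4*s+4*t+4 from by ring]
        have h2 := PF_shift (2*s+4*t+4) 2 s
        rw [show 2*s+4*t+4+2 = 2*s+4*t+6 from by ring,
          show 2*s+4*t+4+2*s = 4*s+4*t+4 from by ring] at h2
        rw [h1, h2]
        field_simp
      have e4 : PF (2*t) 2 (s+1) = PF (2*t+2) 2 s * ((2*t).factorial : ℚ) := by
        have h1 : PF (2*t) 2 (s+1) = PF (2*t) 2 s * (((2*s+2*t).factorial : ℕ) : ℚ) := by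
          rw [PF_succ, show 2*t+2*s = 2*s+2*t from by ring]
        have h2 := PF_shift (2*t) 2 s
        rw [show 2*t+2*s = 2*s+2*t from by ring] at h2
        rw [h1, h2]
        field_simp
      have e5 : PF (s+2*t+2) 1 (s+1) = PF (s+2*t+3) 1 s * ((s+2*t+2).factorial : ℚ) := by
        have h1 : PF (s+2*t+2) 1 (s+1)
            = PF (s+2*t+2) 1 s * (((2*s+2*t+2).factorial : ℕ) : ℚ) := by
          rw [PF_succ, show s+2*t+2+1*s = 2*s+2*t+2 from by ring]
        have h2 := PF_shift (s+2*t+2) 1 s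
        rw [show s+2*t+2+1 = s+2*t+3 from by ring,
          show s+2*t+2+1*s = 2*s+2*t+2 from by ring] at h2
        rw [h1, h2]
        field_simp
      have e6 : PF (4*s+4*t+8) 2 (s+1)
          = PF (4*s+4*t+8) 2 s * ((6*s+4*t+8).factorial : ℚ) := by
        rw [PF_succ, show 4*s+4*t+8+2*s = 6*s+4*t+8 from by ring]
      have p16 : ∏ j ∈ range (s+1), (16:ℚ)^(j+1)
          = (∏ j ∈ range s, (16:ℚ)^(j+1)) * (2^(s+1)*2^(s+1)*2^(s+1)*2^(s+1)) := by
        rw [prod_range_succ]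
        congr 1
        rw [show (16:ℚ) = 2*2*2*2 from by norm_num, mul_pow, mul_pow, mul_pow]
      rw [e1, e2, e3, e4, e5, e6, p16]
      have n1 := PF_ne (s+2*t+2) 1 s
      have n2 := PF_ne (2*s+2*t+5) 2 s
      have n3 := PF_ne (2*s+4*t+6) 2 s
      have n4 := PF_ne (2*t+2) 2 s
      have n5 := PF_ne (s+2*t+3) 1 s
      have n6 := PF_ne (4*s+4*t+8) 2 s
      have n7 : (∏ j ∈ range s, (16:ℚ)^(j+1)) ≠ 0 := (prod16_pos s).ne'
      have n8 : (2:ℚ)^(s+1) ≠ 0 := pow_ne_zero _ two_ne_zero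
      field_simp

lemma factQ_succ (a b : ℕ) (h : a = b+1) :
    ((a.factorial : ℕ) : ℚ) = (a : ℚ) * ((b.factorial : ℕ) : ℚ) := by
  subst h
  rw [Nat.factorial_succ]
  push_cast
  ring

set_option maxHeartbeats 3000000 in
lemma stepB (s t : ℕ) : ASM (2*s+2*t+3) * Fdef s (t+1) =
    ASM (2*s+2*t+1) * Fdef s t *
    (((6*s+6*t+4).factorial : ℚ) /
      (((6*s+4*t+4).factorial : ℚ) * ((2*s+4*t+1).factorial : ℚ))) *
    (((6*s+6*t+7).factorial : ℚ) /
      (((6*s+4*t+6).factorial : ℚ) * ((2*s+4*t+3).factorial : ℚ))) *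
    (((4*s+2*t+3).factorial : ℚ) * ((2*t).factorial : ℚ)) := by
  have hA1 : ASM (2*s+2*t+2) = ASM (2*s+2*t+1) *
      (((6*s+6*t+4).factorial : ℚ) * ((2*s+2*t+1).factorial : ℚ)) /
      (((4*s+4*t+2).factorial : ℚ) * ((4*s+4*t+3).factorial : ℚ)) := by
    have h := ASM_succ (2*s+2*t+1)
    rw [show 3*(2*s+2*t+1)+1 = 6*s+6*t+4 from by ring,
      show 2*(2*s+2*t+1) = 4*s+4*t+2 from by ring] at h
    rw [show (2:ℕ)*s+2*t+2 = 2*s+2*t+1+1 from by ring, h,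
      show 4*s+4*t+2+1 = 4*s+4*t+3 from by ring]
  have hA2 : ASM (2*s+2*t+3) = ASM (2*s+2*t+2) *
      (((6*s+6*t+7).factorial : ℚ) * ((2*s+2*t+2).factorial : ℚ)) /
      (((4*s+4*t+4).factorial : ℚ) * ((4*s+4*t+5).factorial : ℚ)) := by
    have h := ASM_succ (2*s+2*t+2)
    rw [show 3*(2*s+2*t+2)+1 = 6*s+6*t+7 from by ring,
      show 2*(2*s+2*t+2) = 4*s+4*t+4 from by ring] at h
    rw [show (2:ℕ)*s+2*t+3 = 2*s+2*t+2+1 from by ring, h,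
      show 4*s+4*t+4+1 = 4*s+4*t+5 from by ring]
  rw [hA2, hA1, Fdef, Fdef]
  simp only [show s+2*(t+1) = s+2*t+2 from by ring,
    show 2*s+2*(t+1)+3 = 2*s+2*t+5 from by ring,
    show 2*s+4*(t+1)+2 = 2*s+4*t+6 from by ring,
    show 2*(t+1) = 2*t+2 from by ring,
    show s+(2*t+2) = s+2*t+2 from by ring,
    show 2*s+(2*t+2)+3 = 2*s+2*t+5 from by ring,
    show s+(2*t+2)+1 = s+2*t+3 from by ring,
    show s+2*(t+1)+1 = s+2*t+3 from by ring,
    show 4*s+4*(t+1)+4 = 4*s+4*t+8 from by ring,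
    show 4*s+(4*t+4)+4 = 4*s+4*t+8 from by ring,
    show 2*s+(4*t+4)+2 = 2*s+4*t+6 from by ring]
  -- PF shift relations down to the anchors of Fdef s t
  have g1 : PF (s+2*t+2) 1 s = PF (s+2*t+1) 1 s *
      ((2*s+2*t+1).factorial : ℚ) / ((s+2*t+1).factorial : ℚ) := by
    have h := PF_shift (s+2*t+1) 1 s
    rw [show s+2*t+1+1 = s+2*t+2 from by ring,
      show s+2*t+1+1*s = 2*s+2*t+1 from by ring] at h
    exact h
  have g2 : PF (s+2*t+1) 1 s = PF (s+2*t) 1 s *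
      ((2*s+2*t).factorial : ℚ) / ((s+2*t).factorial : ℚ) := by
    have h := PF_shift (s+2*t) 1 s
    rw [show s+2*t+1*s = 2*s+2*t from by ring] at h
    exact h
  have g3 : PF (2*s+2*t+5) 2 s = PF (2*s+2*t+3) 2 s *
      ((4*s+2*t+3).factorial : ℚ) / ((2*s+2*t+3).factorial : ℚ) := by
    have h := PF_shift (2*s+2*t+3) 2 s
    rw [show 2*s+2*t+3+2 = 2*s+2*t+5 from by ring,
      show 2*s+2*t+3+2*s = 4*s+2*t+3 from by ring] at h
    exact h
  have g4 : PF (2*s+4*t+6) 2 s = PF (2*s+4*t+4) 2 s *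
      ((4*s+4*t+4).factorial : ℚ) / ((2*s+4*t+4).factorial : ℚ) := by
    have h := PF_shift (2*s+4*t+4) 2 s
    rw [show 2*s+4*t+4+2 = 2*s+4*t+6 from by ring,
      show 2*s+4*t+4+2*s = 4*s+4*t+4 from by ring] at h
    exact h
  have g5 : PF (2*s+4*t+4) 2 s = PF (2*s+4*t+2) 2 s *
      ((4*s+4*t+2).factorial : ℚ) / ((2*s+4*t+2).factorial : ℚ) := by
    have h := PF_shift (2*s+4*t+2) 2 s
    rw [show 2*s+4*t+2+2 = 2*s+4*t+4 from by ring,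
      show 2*s+4*t+2+2*s = 4*s+4*t+2 from by ring] at h
    exact h
  have g6 : PF (2*t+2) 2 s = PF (2*t) 2 s *
      ((2*s+2*t).factorial : ℚ) / ((2*t).factorial : ℚ) := by
    have h := PF_shift (2*t) 2 s
    rw [show 2*t+2*s = 2*s+2*t from by ring] at h
    exact h
  have g7 : PF (s+2*t+3) 1 s = PF (s+2*t+2) 1 s *
      ((2*s+2*t+2).factorial : ℚ) / ((s+2*t+2).factorial : ℚ) := by
    have h := PF_shift (s+2*t+2) 1 s
    rw [show s+2*t+2+1 = s+2*t+3 from by ring,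
      show s+2*t+2+1*s = 2*s+2*t+2 from by ring] at h
    exact h
  have g8 : PF (4*s+4*t+8) 2 s = PF (4*s+4*t+6) 2 s *
      ((6*s+4*t+6).factorial : ℚ) / ((4*s+4*t+6).factorial : ℚ) := by
    have h := PF_shift (4*s+4*t+6) 2 s
    rw [show 4*s+4*t+6+2 = 4*s+4*t+8 from by ring,
      show 4*s+4*t+6+2*s = 6*s+4*t+6 from by ring] at h
    exact h
  have g9 : PF (4*s+4*t+6) 2 s = PF (4*s+4*t+4) 2 s *
      ((6*s+4*t+4).factorial : ℚ) / ((4*s+4*t+4).factorial : ℚ) := by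
    have h := PF_shift (4*s+4*t+4) 2 s
    rw [show 4*s+4*t+4+2 = 4*s+4*t+6 from by ring,
      show 4*s+4*t+4+2*s = 6*s+4*t+4 from by ring] at h
    exact h
  rw [g7, g1, g2, g3, g4, g5, g6, g8, g9]
  -- factorial successor expansions
  have c1 : ((s+2*t+1).factorial : ℚ) = ((s+2*t+1 : ℕ) : ℚ) * ((s+2*t).factorial : ℚ) :=
    factQ_succ _ _ (by ring)
  have c2 : ((s+2*t+2).factorial : ℚ) = ((s+2*t+2 : ℕ) : ℚ) * ((s+2*t+1).factorial : ℚ) :=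
    factQ_succ _ _ (by ring)
  have c3 : ((2*s+2*t+1).factorial : ℚ) = ((2*s+2*t+1 : ℕ) : ℚ) * ((2*s+2*t).factorial : ℚ) :=
    factQ_succ _ _ (by ring)
  have c4 : ((2*s+2*t+2).factorial : ℚ) = ((2*s+2*t+2 : ℕ) : ℚ) * ((2*s+2*t+1).factorial : ℚ) :=
    factQ_succ _ _ (by ring)
  have c5 : ((2*s+2*t+3).factorial : ℚ) = ((2*s+2*t+3 : ℕ) : ℚ) * ((2*s+2*t+2).factorial : ℚ) :=
    factQ_succ _ _ (by ring)
  have c6 : ((2*s+4*t+2).factorial : ℚ) = ((2*s+4*t+2 : ℕ) : ℚ) * ((2*s+4*t+1).factorial : ℚ) :=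
    factQ_succ _ _ (by ring)
  have c7 : ((2*s+4*t+3).factorial : ℚ) = ((2*s+4*t+3 : ℕ) : ℚ) * ((2*s+4*t+2).factorial : ℚ) :=
    factQ_succ _ _ (by ring)
  have c8 : ((2*s+4*t+4).factorial : ℚ) = ((2*s+4*t+4 : ℕ) : ℚ) * ((2*s+4*t+3).factorial : ℚ) :=
    factQ_succ _ _ (by ring)
  have c9 : ((4*s+4*t+3).factorial : ℚ) = ((4*s+4*t+3 : ℕ) : ℚ) * ((4*s+4*t+2).factorial : ℚ) :=
    factQ_succ _ _ (by ring)
  have c10 : ((4*s+4*t+4).factorial : ℚ) = ((4*s+4*t+4 : ℕ) : ℚ) * ((4*s+4*t+3).factorial : ℚ) :=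
    factQ_succ _ _ (by ring)
  have c11 : ((4*s+4*t+5).factorial : ℚ) = ((4*s+4*t+5 : ℕ) : ℚ) * ((4*s+4*t+4).factorial : ℚ) :=
    factQ_succ _ _ (by ring)
  have c12 : ((4*s+4*t+6).factorial : ℚ) = ((4*s+4*t+6 : ℕ) : ℚ) * ((4*s+4*t+5).factorial : ℚ) :=
    factQ_succ _ _ (by ring)
  have c13 : ((6*s+4*t+5).factorial : ℚ) = ((6*s+4*t+5 : ℕ) : ℚ) * ((6*s+4*t+4).factorial : ℚ) :=
    factQ_succ _ _ (by ring)
  have c14 : ((6*s+4*t+6).factorial : ℚ) = ((6*s+4*t+6 : ℕ) : ℚ) * ((6*s+4*t+5).factorial : ℚ) :=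
    factQ_succ _ _ (by ring)
  rw [c14, c13, c12, c11, c10, c9, c8, c7, c6, c5, c4, c3, c2, c1]
  have n1 := PF_ne (s+2*t) 1 s
  have n2 := PF_ne (2*s+2*t+3) 2 s
  have n3 := PF_ne (2*s+4*t+2) 2 s
  have n4 := PF_ne (2*t) 2 s
  have n5 := PF_ne (s+2*t+1) 1 s
  have n6 := PF_ne (4*s+4*t+4) 2 s
  have n7 : (∏ j ∈ range s, (16:ℚ)^(j+1)) ≠ 0 := (prod16_pos s).ne'
  have nA : ASM (2*s+2*t+1) ≠ 0 := (ASM_pos _).ne'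
  push_cast
  field_simp
  ring

lemma key (s t : ℕ) :
    ((∏ i ∈ Finset.range (2 * t),
        ((3 * (2 * s + 1) + 3 * i + 1).factorial : ℚ) /
          (((3 * (2 * s + 1) + 2 * i + 1).factorial : ℚ) *
            ((2 * s + 1 + 2 * i).factorial : ℚ))) *
      ∏ i ∈ Finset.range t,
        (((2 * (2 * s + 1) + 2 * i + 1).factorial : ℚ) * ((2 * i).factorial : ℚ))) *
      (ASM (2*s+1) * Fdef s 0) = ASM (2*s+1+2*t) * Fdef s t := by
  induction t with
  | zero => simp
  | succ t ih =>
      rw [show 2*(t+1) = (2*t+1)+1 from by ring, prod_range_succ, prod_range_succ,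
        prod_range_succ,
        show (2:ℕ)*s+1+(2*t+1+1) = 2*s+2*t+3 from by omega]
      rw [show (2:ℕ)*s+1+2*t = 2*s+2*t+1 from by ring] at ih
      rw [stepB, ← ih]
      simp only [show 3*(2*s+1)+3*(2*t+1)+1 = 6*s+6*t+7 from by ring,
        show 3*(2*s+1)+2*(2*t+1)+1 = 6*s+4*t+6 from by ring,
        show 2*s+1+2*(2*t+1) = 2*s+4*t+3 from by ring,
        show 3*(2*s+1)+3*(2*t)+1 = 6*s+6*t+4 from by ring,
        show 3*(2*s+1)+2*(2*t)+1 = 6*s+4*t+4 from by ring,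
        show 2*s+1+2*(2*t) = 2*s+4*t+1 from by ring,
        show 2*(2*s+1)+2*t+1 = 4*s+2*t+3 from by ring]
      ring


/-- p odd, r even: Krattenthaler's formula for 𝓖_{p,r} equals the
Mitra–Nienhuis–de Gier–Batchelor expression A(p+r)·S(2(p+r),p) / (A(p)·S(2p,p)),
with p = 2s+1 and r = 2t. -/
theorem stmt9 (s t : ℕ) :
    (∏ i ∈ Finset.range (2 * t),
        ((3 * (2 * s + 1) + 3 * i + 1).factorial : ℚ) /
          (((3 * (2 * s + 1) + 2 * i + 1).factorial : ℚ) *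
            ((2 * s + 1 + 2 * i).factorial : ℚ))) *
      ∏ i ∈ Finset.range t,
        (((2 * (2 * s + 1) + 2 * i + 1).factorial : ℚ) * ((2 * i).factorial : ℚ)) =
    ASM (2 * s + 1 + 2 * t) * SOdd (2 * (2 * s + 1 + 2 * t)) s /
      (ASM (2 * s + 1) * SOdd (2 * (2 * s + 1)) s) := by
  have h2 : SOdd (2*(2*s+1)) s = Fdef s 0 := by
    have h := soddClosed s 0
    rw [show 2*s+1+2*0 = 2*s+1 from by ring] at h
    exact h
  rw [soddClosed s t, h2,
    eq_div_iff (ne_of_gt (mul_pos (ASM_pos _) (Fdef_pos s 0)))]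
  exact key s t
end

section
/- Let R be a commutative ring, let τ ∈ R, and let r ≥ 1, p ≥ 0 be integers. For q ≥ 0 set P_q = ∏_{m=1}^r (1+τu_m)^q · ∏_{1≤l<m≤r} (u_m − u_l)(1 + τu_m + u_l u_m) ∈ R[u_1,…,u_r]. Then Σ_a τ^{e(a)} · [coefficient of ∏_{i=1}^r u_i^{a_i−1} in P_p] = [coefficient of ∏_{i=1}^r u_i^{2i−2} in P_{p+1}], where the sum runs over all tuples a = (a_1,…,a_r) with a_1 = 1 and a_i ∈ {2i−2, 2i−1} for 2 ≤ i ≤ r, and e(a) denotes the number of indices i with a_i even. -/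
open Finset

/-- The polynomial P_q = ∏ₘ (1+τuₘ)^q · ∏_{l<m} (uₘ−u_l)(1+τuₘ+u_luₘ). -/
noncomputable def Ppoly (R : Type*) [CommRing R] (τ : R) (r q : ℕ) :
    MvPolynomial (Fin r) R :=
  (∏ m : Fin r, (1 + MvPolynomial.C τ * MvPolynomial.X m) ^ q) *
    ∏ m : Fin r, ∏ l ∈ Finset.Iio m,
      ((MvPolynomial.X m - MvPolynomial.X l) *
        (1 + MvPolynomial.C τ * MvPolynomial.X m +
          MvPolynomial.X l * MvPolynomial.X m))

section Aux
open MvPolynomial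
variable {R : Type*} [CommRing R]


lemma prodCX (τ : R) {r : ℕ} (t : Finset (Fin r)) :
    ∏ i ∈ t, (C τ * X i) = monomial (∑ i ∈ t, Finsupp.single i 1) ((τ : R) ^ t.card) := by
  induction t using Finset.induction with
  | empty => simp [MvPolynomial.monomial_zero']
  | @insert a s h ih =>
    rw [Finset.prod_insert h, ih, Finset.sum_insert h, Finset.card_insert_of_notMem h]
    rw [show (C τ * X a : MvPolynomial (Fin r) R) = monomial (Finsupp.single a 1) τ by
      simp [MvPolynomial.X, MvPolynomial.C_mul_monomial]]
    rw [MvPolynomial.monomial_mul]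
    ring_nf

lemma msum_apply {r : ℕ} (t : Finset (Fin r)) (j : Fin r) :
    (∑ i ∈ t, Finsupp.single i (1:ℕ)) j = if j ∈ t then 1 else 0 := by
  rw [Finsupp.finset_sum_apply]
  simp [Finsupp.single_apply, Finset.sum_ite_eq t j (fun _ => (1:ℕ))]

lemma Ppoly_succ (τ : R) (r p : ℕ) :
    Ppoly R τ r (p + 1) = (∏ m : Fin r, (1 + C τ * X m)) * Ppoly R τ r p := by
  unfold Ppoly
  simp only [pow_succ, Finset.prod_mul_distrib]
  ring

lemma prod_one_add (τ : R) (r : ℕ) :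
    ∏ m : Fin r, (1 + C τ * X m) =
      ∑ t ∈ (Finset.univ : Finset (Fin r)).powerset,
        monomial (∑ i ∈ t, Finsupp.single i 1) ((τ : R) ^ t.card) := by
  have : ∀ m : Fin r, (1 + C τ * X m : MvPolynomial (Fin r) R) = C τ * X m + 1 := by
    intro m; ring
  simp_rw [this]
  rw [Finset.prod_add]
  simp [prodCX]

end Aux

/-- sum rule, homogeneous limit:
Σ_a τ^(e(a)) · [coeff of ∏ uᵢ^(aᵢ−1) in P_p] = [coeff of ∏ uᵢ^(2i−2) in P_{p+1}],
the sum over tuples a with a₁ = 1 and aᵢ ∈ {2i−2, 2i−1} for i ≥ 2, where e(a) is the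
number of even aᵢ.  Tuples are encoded as maps `a : Fin r → Fin (2*r)`, `i : Fin r`
standing for the 1-based index `i.1 + 1` (so 2i−2 is `2*i.1` and 2i−1 is `2*i.1+1`). -/
theorem stmt12 (R : Type*) [CommRing R] (τ : R) (r p : ℕ) (hr : 1 ≤ r) :
    ∑ a ∈ Finset.univ.filter (fun a : Fin r → Fin (2 * r) =>
        (a ⟨0, hr⟩).1 = 1 ∧
          ∀ i : Fin r, 0 < i.1 → ((a i).1 = 2 * i.1 ∨ (a i).1 = 2 * i.1 + 1)),
      τ ^ (Finset.univ.filter (fun i : Fin r => Even (a i).1)).card *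
        MvPolynomial.coeff
          (Finsupp.equivFunOnFinite.symm fun i : Fin r => (a i).1 - 1)
          (Ppoly R τ r p) =
    MvPolynomial.coeff (Finsupp.equivFunOnFinite.symm fun i : Fin r => 2 * i.1)
      (Ppoly R τ r (p + 1)) := by
  classical
  set d : Fin r →₀ ℕ := Finsupp.equivFunOnFinite.symm (fun i : Fin r => 2 * i.1) with hd
  have hdapp : ∀ j : Fin r, d j = 2 * j.1 := fun j => rfl
  rw [Ppoly_succ, _root_.prod_one_add, Finset.sum_mul, MvPolynomial.coeff_sum]
  simp only [MvPolynomial.coeff_monomial_mul']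
  -- rewrite the condition (m_t ≤ d) as (⟨0,hr⟩ ∉ t)
  have hcond : ∀ t : Finset (Fin r),
      ((∑ i ∈ t, Finsupp.single i (1:ℕ)) ≤ d) ↔ (⟨0, hr⟩ : Fin r) ∉ t := by
    intro t
    rw [Finsupp.le_def]
    constructor
    · intro h h0
      have := h ⟨0, hr⟩
      simp [msum_apply, h0, hdapp] at this
    · intro h0 j
      rw [msum_apply, hdapp]
      by_cases hjt : j ∈ t
      · have : j.1 ≠ 0 := by
          intro hj0
          exact h0 (by { have : j = ⟨0, hr⟩ := Fin.ext hj0; rwa [← this] })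
        simp [hjt]; omega
      · simp [hjt]

  have step : ∀ t ∈ (Finset.univ : Finset (Fin r)).powerset,
      (if (∑ i ∈ t, Finsupp.single i (1:ℕ)) ≤ d then
        τ ^ t.card * MvPolynomial.coeff (d - ∑ i ∈ t, Finsupp.single i 1) (Ppoly R τ r p)
      else 0) =
      (if (⟨0, hr⟩ : Fin r) ∉ t then
        τ ^ t.card * MvPolynomial.coeff (d - ∑ i ∈ t, Finsupp.single i 1) (Ppoly R τ r p)
      else 0) := by
    intro t _
    exact if_congr (hcond t) rfl rfl
  rw [Finset.sum_congr rfl step, ← Finset.sum_filter]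
  refine Finset.sum_nbij' (fun a => Finset.univ.filter (fun i : Fin r => Even (a i).1))
    (fun t => fun k : Fin r => if k ∈ t then
        (⟨2 * k.1, by omega⟩ : Fin (2 * r)) else ⟨2 * k.1 + 1, by omega⟩)
    ?_ ?_ ?_ ?_ ?_
  · intro a ha
    rw [Finset.mem_filter] at ha ⊢
    refine ⟨Finset.mem_powerset.2 (Finset.subset_univ _), ?_⟩
    rw [Finset.mem_filter]
    rintro ⟨-, h0⟩
    rw [ha.2.1] at h0
    exact (Nat.not_even_iff.2 rfl) h0
  · intro t ht
    rw [Finset.mem_filter] at ht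
    rw [Finset.mem_filter]
    refine ⟨Finset.mem_univ _, ?_, ?_⟩
    · simp only [if_neg ht.2]
    · intro i hi
      by_cases hit : i ∈ t
      · left; simp [hit]
      · right; simp [hit]
  · intro a ha
    rw [Finset.mem_filter] at ha
    funext k
    by_cases hk : Even (a k).1
    · simp only [Finset.mem_filter, Finset.mem_univ, true_and, if_pos hk]
      by_cases hk0 : k.1 = 0
      · exfalso
        have : k = ⟨0, hr⟩ := Fin.ext hk0
        rw [this, ha.2.1] at hk
        exact (Nat.not_even_iff.2 rfl) hk
      · rcases ha.2.2 k (Nat.pos_of_ne_zero hk0) with h | h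
        · exact (Fin.ext h.symm)
        · exfalso; rw [h] at hk; exact (Nat.not_even_iff.2 (by omega)) hk
    · simp only [Finset.mem_filter, Finset.mem_univ, true_and, if_neg hk]
      by_cases hk0 : k.1 = 0
      · have : k = ⟨0, hr⟩ := Fin.ext hk0
        rw [this]; exact Fin.ext (by rw [ha.2.1]; simp [hk0, this])
      · rcases ha.2.2 k (Nat.pos_of_ne_zero hk0) with h | h
        · exfalso; apply hk; rw [h]; exact even_two_mul _
        · exact Fin.ext h.symm
  · intro t ht
    ext k
    simp only [Finset.mem_filter, Finset.mem_univ, true_and]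
    by_cases hkt : k ∈ t
    · simp [hkt, even_two_mul]
    · simp [hkt, Nat.not_even_iff.2 (by omega : (2 * k.1 + 1) % 2 = 1)]
  · intro a ha
    rw [Finset.mem_filter] at ha
    congr 1
    congr 1
    apply Finsupp.ext
    intro j
    rw [Finsupp.tsub_apply, msum_apply, hdapp]
    have hlhs : (Finsupp.equivFunOnFinite.symm fun i : Fin r => (a i).1 - 1) j
        = (a j).1 - 1 := rfl
    rw [hlhs]
    simp only [Finset.mem_filter, Finset.mem_univ, true_and]
    by_cases hj0 : j.1 = 0
    · have hje : j = ⟨0, hr⟩ := Fin.ext hj0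
      rw [hje, ha.2.1, if_neg (by decide : ¬ Even 1)]
      simp
    · rcases ha.2.2 j (Nat.pos_of_ne_zero hj0) with h | h
      · rw [h]
        simp [even_two_mul]
      · rw [h, if_neg (Nat.not_even_iff.2 (by omega))]
        omega
end
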